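/- Let n ≥ 5 and let A be the n×n clamped-free beam matrix. Then the operator 1-norm of the inverse equals ‖A⁻¹‖₁ = (n⁴ − n²)/8; i.e., the maximum over columns j of ∑_{i=1}^{n} |(A⁻¹)_{i,j}| equals (n⁴ − n²)/8 and is attained at column j = n−1. -/
import Mathlib


open scoped ENNReal

/-- The `n × n` clamped-free beam matrix (1-based index `i' = i+1`). -/
def A_CF (n : ℕ) : Matrix (Fin n) (Fin n) ℝ :=
  Matrix.of fun i j =>
    let i' := (i : ℕ) + 1
    let j' := (j : ℕ) + 1
    if i' = j' then (if i' = 1 then 7 else if i' = n - 1 then 5 else if i' = n then 2 else 6)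
    else if j' = i' + 1 then (if i' = n - 1 then -2 else -4)
    else if i' = j' + 1 then -4
    else if j' = i' + 2 then 1
    else if i' = j' + 2 then (if i' = n then 2 else 1)
    else 0

noncomputable def gEnt (i j : ℕ) : ℝ :=
  if i ≤ j then (3*((i:ℝ)+1)^2*((j:ℝ)+1) - ((i:ℝ)+1)^3 + ((i:ℝ)+1))/6
  else (3*((j:ℝ)+1)^2*((i:ℝ)+1) - ((j:ℝ)+1)^3 + ((j:ℝ)+1))/6
noncomputable def aN (n i k : ℕ) : ℝ :=
  if i + 1 = k + 1 then
    (if i + 1 = 1 then 7 else if i + 1 = n - 1 then 5 else if i + 1 = n then 2 else 6)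
  else if k + 1 = i + 1 + 1 then (if i + 1 = n - 1 then -2 else -4)
  else if i + 1 = k + 1 + 1 then -4
  else if k + 1 = i + 1 + 2 then 1
  else if i + 1 = k + 1 + 2 then (if i + 1 = n then 2 else 1)
  else 0
lemma aN_zero (n i k : ℕ) (h : i + 2 < k ∨ k + 2 < i) : aN n i k = 0 := by
  rcases h with h | h <;>
  · simp only [aN]
    split_ifs <;> first | rfl | (exfalso; omega)
lemma sum_window (N a b : ℕ) (f : ℕ → ℝ) (hb : b ≤ N)
    (h0 : ∀ k, k < N → k < a ∨ b ≤ k → f k = 0) :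
    ∑ k ∈ Finset.range N, f k = ∑ k ∈ Finset.Ico a b, f k := by
  rw [Finset.range_eq_Ico]
  refine (Finset.sum_subset (Finset.Ico_subset_Ico (Nat.zero_le a) hb) ?_).symm
  intro k hk hk2
  simp only [Finset.mem_Ico] at hk hk2
  exact h0 k hk.2 (by omega)
lemma Ico_expand3 (a : ℕ) (f : ℕ → ℝ) :
    ∑ k ∈ Finset.Ico a (a+3), f k = f a + f (a+1) + f (a+2) := by
  rw [Finset.sum_Ico_eq_sum_range]; simp [Finset.sum_range_succ]
lemma Ico_expand4 (a : ℕ) (f : ℕ → ℝ) :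
    ∑ k ∈ Finset.Ico a (a+4), f k = f a + f (a+1) + f (a+2) + f (a+3) := by
  rw [Finset.sum_Ico_eq_sum_range]; simp [Finset.sum_range_succ]
lemma Ico_expand5 (a : ℕ) (f : ℕ → ℝ) :
    ∑ k ∈ Finset.Ico a (a+5), f k = f a + f (a+1) + f (a+2) + f (a+3) + f (a+4) := by
  rw [Finset.sum_Ico_eq_sum_range]; simp [Finset.sum_range_succ]

set_option maxHeartbeats 2000000 in
lemma key_sum (m i j : ℕ) (hi : i < m + 5) (hj : j < m + 5) :
    ∑ k ∈ Finset.range (m+5), aN (m+5) i k * gEnt k j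
      = if i = j then (if j = m + 4 then 2 else 1) else 0 := by
  rcases (by omega : i = 0 ∨ i = 1 ∨ (2 ≤ i ∧ i ≤ m + 2) ∨ i = m + 3 ∨ i = m + 4)
    with h | h | ⟨h1, h2⟩ | h | h
  · -- row 0 : entries 7, -4, 1 at k = 0,1,2
    subst h
    rw [sum_window (m+5) 0 3 _ (by omega)
      (fun k hk hk2 => by rw [aN_zero _ _ _ (by omega)]; ring)]
    rw [show (3:ℕ) = 0 + 3 from rfl, Ico_expand3]
    have a0 : aN (m+5) 0 0 = 7 := by
      simp only [aN]; split_ifs <;> first | (exfalso; omega) | norm_num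
    have a1 : aN (m+5) 0 1 = -4 := by
      simp only [aN]; split_ifs <;> first | (exfalso; omega) | norm_num
    have a2 : aN (m+5) 0 2 = 1 := by
      simp only [aN]; split_ifs <;> first | (exfalso; omega) | norm_num
    rw [a0, a1, a2]
    rcases (by omega : j = 0 ∨ j = 1 ∨ 2 ≤ j) with hj0 | hj0 | hj0
    · subst hj0; simp only [gEnt]
      split_ifs <;> first | (exfalso; first | omega | assumption) | (push_cast; ring) | norm_num
    · subst hj0; simp only [gEnt]
      split_ifs <;> first | (exfalso; first | omega | assumption) | (push_cast; ring) | norm_num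
    · simp only [gEnt]
      split_ifs <;> first | (exfalso; first | omega | assumption) | (push_cast; ring) | norm_num
  · subst h
    rw [sum_window (m+5) (0) (0+4) _ (by omega)
      (fun k hk hk2 => by rw [aN_zero _ _ _ (by omega)]; ring),
      Ico_expand4]
    have a0 : aN (m+5) (1) (0) = -4 := by simp only [aN]; split_ifs <;> first | (exfalso; omega) | norm_num
    have a1 : aN (m+5) (1) (1) = 6 := by simp only [aN]; split_ifs <;> first | (exfalso; omega) | norm_num
    have a2 : aN (m+5) (1) (2) = -4 := by simp only [aN]; split_ifs <;> first | (exfalso; omega) | norm_num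
    have a3 : aN (m+5) (1) (3) = 1 := by simp only [aN]; split_ifs <;> first | (exfalso; omega) | norm_num
    rw [a0, a1, a2, a3]
    rcases (by omega : j = 0 ∨ j = 1 ∨ j = 2 ∨ 3 ≤ j) with hj0 | hj0 | hj0 | hj0
    · subst hj0; simp only [gEnt]
      split_ifs <;> first | (exfalso; first | omega | assumption) | (push_cast; ring) | norm_num
    · subst hj0; simp only [gEnt]
      split_ifs <;> first | (exfalso; first | omega | assumption) | (push_cast; ring) | norm_num
    · subst hj0; simp only [gEnt]
      split_ifs <;> first | (exfalso; first | omega | assumption) | (push_cast; ring) | norm_num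
    · simp only [gEnt]
      split_ifs <;> first | (exfalso; first | omega | assumption) | (push_cast; ring) | norm_num
  · obtain ⟨t, rfl⟩ : ∃ t, i = t + 2 := ⟨i - 2, by omega⟩
    have ht : t ≤ m := by omega
    rw [sum_window (m+5) (t) (t+5) _ (by omega)
      (fun k hk hk2 => by rw [aN_zero _ _ _ (by omega)]; ring),
      Ico_expand5]
    have a0 : aN (m+5) (t+2) (t) = 1 := by simp only [aN]; split_ifs <;> first | (exfalso; omega) | norm_num
    have a1 : aN (m+5) (t+2) (t+1) = -4 := by simp only [aN]; split_ifs <;> first | (exfalso; omega) | norm_num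
    have a2 : aN (m+5) (t+2) (t+2) = 6 := by simp only [aN]; split_ifs <;> first | (exfalso; omega) | norm_num
    have a3 : aN (m+5) (t+2) (t+3) = -4 := by simp only [aN]; split_ifs <;> first | (exfalso; omega) | norm_num
    have a4 : aN (m+5) (t+2) (t+4) = 1 := by simp only [aN]; split_ifs <;> first | (exfalso; omega) | norm_num
    rw [a0, a1, a2, a3, a4]
    rcases (by omega : j < t ∨ j = t ∨ j = t+1 ∨ j = t+2 ∨ j = t+3 ∨ t+4 ≤ j) with hj0 | hj0 | hj0 | hj0 | hj0 | hj0
    · simp only [gEnt]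
      split_ifs <;> first | (exfalso; first | omega | assumption) | (push_cast; ring) | norm_num
    · subst hj0; simp only [gEnt]
      split_ifs <;> first | (exfalso; first | omega | assumption) | (push_cast; ring) | norm_num
    · subst hj0; simp only [gEnt]
      split_ifs <;> first | (exfalso; first | omega | assumption) | (push_cast; ring) | norm_num
    · subst hj0; simp only [gEnt]
      split_ifs <;> first | (exfalso; first | omega | assumption) | (push_cast; ring) | norm_num
    · subst hj0; simp only [gEnt]
      split_ifs <;> first | (exfalso; first | omega | assumption) | (push_cast; ring) | norm_num
    · simp only [gEnt]
      split_ifs <;> first | (exfalso; first | omega | assumption) | (push_cast; ring) | norm_num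
  · subst h
    rw [sum_window (m+5) (m+1) (m+1+4) _ (by omega)
      (fun k hk hk2 => by rw [aN_zero _ _ _ (by omega)]; ring),
      Ico_expand4]
    have a0 : aN (m+5) (m+3) (m+1) = 1 := by simp only [aN]; split_ifs <;> first | (exfalso; omega) | norm_num
    have a1 : aN (m+5) (m+3) (m+2) = -4 := by simp only [aN]; split_ifs <;> first | (exfalso; omega) | norm_num
    have a2 : aN (m+5) (m+3) (m+3) = 5 := by simp only [aN]; split_ifs <;> first | (exfalso; omega) | norm_num
    have a3 : aN (m+5) (m+3) (m+4) = -2 := by simp only [aN]; split_ifs <;> first | (exfalso; omega) | norm_num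
    rw [a0, a1, a2, a3]
    rcases (by omega : j < m+1 ∨ j = m+1 ∨ j = m+2 ∨ j = m+3 ∨ j = m+4) with hj0 | hj0 | hj0 | hj0 | hj0
    · simp only [gEnt]
      split_ifs <;> first | (exfalso; first | omega | assumption) | (push_cast; ring) | norm_num
    · subst hj0; simp only [gEnt]
      split_ifs <;> first | (exfalso; first | omega | assumption) | (push_cast; ring) | norm_num
    · subst hj0; simp only [gEnt]
      split_ifs <;> first | (exfalso; first | omega | assumption) | (push_cast; ring) | norm_num
    · subst hj0; simp only [gEnt]
      split_ifs <;> first | (exfalso; first | omega | assumption) | (push_cast; ring) | norm_num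
    · subst hj0; simp only [gEnt]
      split_ifs <;> first | (exfalso; first | omega | assumption) | (push_cast; ring) | norm_num
  · subst h
    rw [sum_window (m+5) (m+2) (m+2+3) _ (by omega)
      (fun k hk hk2 => by rw [aN_zero _ _ _ (by omega)]; ring),
      Ico_expand3]
    have a0 : aN (m+5) (m+4) (m+2) = 2 := by simp only [aN]; split_ifs <;> first | (exfalso; omega) | norm_num
    have a1 : aN (m+5) (m+4) (m+3) = -4 := by simp only [aN]; split_ifs <;> first | (exfalso; omega) | norm_num
    have a2 : aN (m+5) (m+4) (m+4) = 2 := by simp only [aN]; split_ifs <;> first | (exfalso; omega) | norm_num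
    rw [a0, a1, a2]
    rcases (by omega : j < m+2 ∨ j = m+2 ∨ j = m+3 ∨ j = m+4) with hj0 | hj0 | hj0 | hj0
    · simp only [gEnt]
      split_ifs <;> first | (exfalso; first | omega | assumption) | (push_cast; ring) | norm_num
    · subst hj0; simp only [gEnt]
      split_ifs <;> first | (exfalso; first | omega | assumption) | (push_cast; ring) | norm_num
    · subst hj0; simp only [gEnt]
      split_ifs <;> first | (exfalso; first | omega | assumption) | (push_cast; ring) | norm_num
    · subst hj0; simp only [gEnt]
      split_ifs <;> first | (exfalso; first | omega | assumption) | (push_cast; ring) | norm_num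

noncomputable def cfac (n j : ℕ) : ℝ := if j + 1 = n then 1/2 else 1

noncomputable def Bmat (n : ℕ) : Matrix (Fin n) (Fin n) ℝ :=
  Matrix.of fun i j => cfac n (j : ℕ) * gEnt (i : ℕ) (j : ℕ)

-- power sums
lemma sum_pow1 (N : ℕ) : ∑ i ∈ Finset.range N, ((i:ℝ)+1) = (N:ℝ)*((N:ℝ)+1)/2 := by
  induction N with
  | zero => simp
  | succ NN ih => rw [Finset.sum_range_succ, ih]; push_cast; ring
lemma sum_pow2 (N : ℕ) : ∑ i ∈ Finset.range N, ((i:ℝ)+1)^2 = (N:ℝ)*((N:ℝ)+1)*(2*(N:ℝ)+1)/6 := by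
  induction N with
  | zero => simp
  | succ NN ih => rw [Finset.sum_range_succ, ih]; push_cast; ring
lemma sum_pow3 (N : ℕ) : ∑ i ∈ Finset.range N, ((i:ℝ)+1)^3 = ((N:ℝ)*((N:ℝ)+1))^2/4 := by
  induction N with
  | zero => simp
  | succ NN ih => rw [Finset.sum_range_succ, ih]; push_cast; ring

lemma sum_gEnt_col (m : ℕ) :
    ∑ i ∈ Finset.range (m+5), gEnt i (m+3)
      = (((m:ℝ)+5) ^ 4 - ((m:ℝ)+5) ^ 2) / 8 := by
  rw [Finset.sum_range_succ]
  have h1 : ∀ i ∈ Finset.range (m+4),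
      gEnt i (m+3) = (3*((m:ℝ)+4)*((i:ℝ)+1)^2 - ((i:ℝ)+1)^3 + ((i:ℝ)+1))/6 := by
    intro i hi
    simp only [Finset.mem_range] at hi
    rw [gEnt, if_pos (by omega)]
    push_cast
    ring
  rw [Finset.sum_congr rfl h1]
  have h2 : gEnt (m+4) (m+3)
      = (3*((m:ℝ)+4)^2*((m:ℝ)+5) - ((m:ℝ)+4)^3 + ((m:ℝ)+4))/6 := by
    rw [gEnt, if_neg (by omega)]
    push_cast
    ring
  rw [h2]
  have : ∑ i ∈ Finset.range (m+4), (3*((m:ℝ)+4)*((i:ℝ)+1)^2 - ((i:ℝ)+1)^3 + ((i:ℝ)+1))/6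
      = (3*((m:ℝ)+4)*(∑ i ∈ Finset.range (m+4), ((i:ℝ)+1)^2)
        - (∑ i ∈ Finset.range (m+4), ((i:ℝ)+1)^3)
        + (∑ i ∈ Finset.range (m+4), ((i:ℝ)+1)))/6 := by
    rw [← Finset.sum_div]
    congr 1
    rw [Finset.sum_add_distrib, Finset.sum_sub_distrib, ← Finset.mul_sum]
  rw [this, sum_pow1, sum_pow2, sum_pow3]
  push_cast
  ring

lemma gEnt_nonneg (i j : ℕ) : 0 ≤ gEnt i j := by
  have hi : (0:ℝ) ≤ (i:ℝ) := Nat.cast_nonneg i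
  have hj : (0:ℝ) ≤ (j:ℝ) := Nat.cast_nonneg j
  unfold gEnt
  split_ifs with h
  · have hij : (i:ℝ) ≤ (j:ℝ) := by exact_mod_cast h
    nlinarith [mul_nonneg (sq_nonneg ((i:ℝ)+1)) (sub_nonneg.2 hij),
      mul_nonneg (mul_nonneg (by linarith : (0:ℝ) ≤ (i:ℝ)+1) (by linarith : (0:ℝ) ≤ (i:ℝ)+1))
        (by linarith : (0:ℝ) ≤ (i:ℝ)+1)]
  · have hij : (j:ℝ) ≤ (i:ℝ) := by
      have : j ≤ i := by omega
      exact_mod_cast this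
    nlinarith [mul_nonneg (sq_nonneg ((j:ℝ)+1)) (sub_nonneg.2 hij),
      mul_nonneg (mul_nonneg (by linarith : (0:ℝ) ≤ (j:ℝ)+1) (by linarith : (0:ℝ) ≤ (j:ℝ)+1))
        (by linarith : (0:ℝ) ≤ (j:ℝ)+1)]

lemma bound_pointwise (m i j : ℕ) (hi : i < m+5) (hj : j < m+5) :
    cfac (m+5) j * gEnt i j ≤ gEnt i (m+3) := by
  have hi0 : (0:ℝ) ≤ (i:ℝ) := Nat.cast_nonneg i
  have hj0 : (0:ℝ) ≤ (j:ℝ) := Nat.cast_nonneg j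
  have him : (i:ℝ) ≤ (m:ℝ)+4 := by exact_mod_cast Nat.lt_succ_iff.mp (by omega : i < (m+4)+1)
  by_cases hc : j + 1 = m + 5
  · -- j = m+4, cfac = 1/2 ; i ≤ j
    have hjm : j = m + 4 := by omega
    subst hjm
    rw [cfac, if_pos (by omega), gEnt, if_pos (by omega)]
    push_cast
    by_cases him3 : i ≤ m + 3
    · rw [gEnt, if_pos him3]
      have him3' : (i:ℝ) ≤ (m:ℝ)+3 := by exact_mod_cast him3
      push_cast
      nlinarith [mul_nonneg (sq_nonneg ((i:ℝ)+1)) (by linarith : (0:ℝ) ≤ 3*((m:ℝ)+5)-6-((i:ℝ)+1))]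
    · have : i = m + 4 := by omega
      subst this
      rw [gEnt, if_neg (by omega)]
      push_cast
      nlinarith [sq_nonneg ((m:ℝ)+5), (by exact_mod_cast Nat.cast_nonneg m : (0:ℝ) ≤ (m:ℝ))]
  · -- cfac = 1, j ≤ m+3
    rw [cfac, if_neg hc, one_mul]
    have hjm : j ≤ m + 3 := by omega
    have hjm' : (j:ℝ) ≤ (m:ℝ)+3 := by exact_mod_cast hjm
    by_cases hij : i ≤ j
    · rw [gEnt, if_pos hij, gEnt, if_pos (by omega)]
      push_cast
      nlinarith [mul_nonneg (sq_nonneg ((i:ℝ)+1)) (by linarith : (0:ℝ) ≤ ((m:ℝ)+4)-((j:ℝ)+1))]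
    · have hji : (j:ℝ) + 1 ≤ (i:ℝ) := by exact_mod_cast (by omega : j + 1 ≤ i)
      rw [gEnt, if_neg hij]
      by_cases hi3 : i ≤ m + 3
      · rw [gEnt, if_pos hi3]
        have hi3' : (i:ℝ) ≤ (m:ℝ)+3 := by exact_mod_cast hi3
        push_cast
        have hIJ : ((j:ℝ)+1) ≤ ((i:ℝ)+1) := by linarith
        have h2 : (0:ℝ) ≤ 2*((i:ℝ)+1)^2 + 2*((i:ℝ)+1)*((j:ℝ)+1) - ((j:ℝ)+1)^2 + 1 := by
          nlinarith [mul_nonneg (by linarith : (0:ℝ) ≤ (j:ℝ)+1) (sub_nonneg.2 hIJ),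
            sq_nonneg ((i:ℝ)+1), mul_nonneg (by linarith : (0:ℝ) ≤ (i:ℝ)+1) (by linarith : (0:ℝ) ≤ (j:ℝ)+1)]
        nlinarith [mul_nonneg (sub_nonneg.2 hIJ) h2,
          mul_nonneg (sq_nonneg ((i:ℝ)+1)) (by linarith : (0:ℝ) ≤ ((m:ℝ)+4)-((i:ℝ)+1))]
      · have : i = m + 4 := by omega
        subst this
        rw [gEnt, if_neg (by omega)]
        push_cast
        -- φ(J) ≤ φ(M), M = m+4, N = m+5
        have hJM : ((j:ℝ)+1) ≤ ((m:ℝ)+4) := by linarith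
        have h2 : (0:ℝ) ≤ 3*((m:ℝ)+5)*(((m:ℝ)+4)+((j:ℝ)+1))
            - (((m:ℝ)+4)^2 + ((m:ℝ)+4)*((j:ℝ)+1) + ((j:ℝ)+1)^2) + 1 := by
          nlinarith [mul_nonneg (by linarith : (0:ℝ) ≤ (j:ℝ)+1) (sub_nonneg.2 hJM)]
        nlinarith [mul_nonneg (sub_nonneg.2 hJM) h2]

lemma l1_norm_eq (n : ℕ) (x : PiLp 1 (fun _ : Fin n => ℝ)) : ‖x‖ = ∑ i, |x i| := by
  rw [PiLp.norm_eq_sum (by norm_num : 0 < (1 : ℝ≥0∞).toReal)]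
  simp [Real.norm_eq_abs]

lemma opNorm_one_eq (n : ℕ) (M : Matrix (Fin n) (Fin n) ℝ) (C : ℝ) (hC : 0 ≤ C)
    (hle : ∀ j : Fin n, ∑ i : Fin n, |M i j| ≤ C) (j₀ : Fin n)
    (heq : ∑ i : Fin n, |M i j₀| = C) :
    ‖LinearMap.toContinuousLinearMap
      ((WithLp.linearEquiv 1 ℝ (Fin n → ℝ)).symm.toLinearMap ∘ₗ
        Matrix.toLin' M ∘ₗ (WithLp.linearEquiv 1 ℝ (Fin n → ℝ)).toLinearMap)‖ = C := by
  set f := LinearMap.toContinuousLinearMap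
      ((WithLp.linearEquiv 1 ℝ (Fin n → ℝ)).symm.toLinearMap ∘ₗ
        Matrix.toLin' M ∘ₗ (WithLp.linearEquiv 1 ℝ (Fin n → ℝ)).toLinearMap) with hf
  have happ : ∀ x : PiLp 1 (fun _ : Fin n => ℝ), ∀ i, f x i = ∑ j, M i j * x j := by
    intro x i
    simp [hf, Matrix.toLin'_apply, Matrix.mulVec, dotProduct]
  refine le_antisymm (ContinuousLinearMap.opNorm_le_bound f hC ?_) ?_
  · intro x
    rw [l1_norm_eq, l1_norm_eq]
    have h1 : ∀ i, |f x i| ≤ ∑ j, |M i j| * |x j| := by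
      intro i
      rw [happ]
      refine (Finset.abs_sum_le_sum_abs _ _).trans ?_
      exact le_of_eq (Finset.sum_congr rfl fun j _ => abs_mul _ _)
    calc ∑ i, |f x i| ≤ ∑ i, ∑ j, |M i j| * |x j| := Finset.sum_le_sum fun i _ => h1 i
      _ = ∑ j, (∑ i, |M i j|) * |x j| := by rw [Finset.sum_comm]; simp [Finset.sum_mul]
      _ ≤ ∑ j, C * |x j| := Finset.sum_le_sum fun j _ => by
            have := hle j
            have : (∑ i, |M i j|) * |x j| ≤ C * |x j| :=
              mul_le_mul_of_nonneg_right (hle j) (abs_nonneg _)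
            linarith
      _ = C * ∑ j, |x j| := by rw [Finset.mul_sum]
  · set x₀ : PiLp 1 (fun _ : Fin n => ℝ) :=
      (WithLp.equiv 1 (Fin n → ℝ)).symm (Pi.single j₀ 1) with hx₀
    have hxs : ∀ i, x₀ i = (Pi.single j₀ (1:ℝ) : Fin n → ℝ) i := fun i => rfl
    have hnx : ‖x₀‖ = 1 := by
      rw [l1_norm_eq]
      rw [Finset.sum_eq_single j₀]
      · simp [hxs]
      · intro b _ hb
        rw [hxs, Pi.single_eq_of_ne hb]
        simp
      · simp
    have hfx : ‖f x₀‖ = C := by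
      rw [l1_norm_eq]
      rw [← heq]
      refine Finset.sum_congr rfl fun i _ => ?_
      rw [happ]
      rw [Finset.sum_eq_single j₀]
      · simp [hxs]
      · intro b _ hb
        rw [hxs, Pi.single_eq_of_ne hb]
        simp
      · simp
    have := f.le_opNorm x₀
    rw [hfx, hnx, mul_one] at this
    exact this

/-- The operator norm of an `n × n` real matrix induced by the vector `p`-norm
on `ℝⁿ` (realized as `PiLp`/`WithLp`). -/
noncomputable def opNormP (n : ℕ) (p : ℝ≥0∞) [Fact (1 ≤ p)]
    (B : Matrix (Fin n) (Fin n) ℝ) : ℝ :=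
  ‖LinearMap.toContinuousLinearMap
    ((WithLp.linearEquiv p ℝ (Fin n → ℝ)).symm.toLinearMap ∘ₗ
      Matrix.toLin' B ∘ₗ (WithLp.linearEquiv p ℝ (Fin n → ℝ)).toLinearMap)‖

/-- The operator `1`-norm of the inverse of the clamped-free beam matrix equals
`(n⁴ - n²)/8`: every absolute column sum is at most this value, and it is
attained at column `j = n - 1` (1-based), i.e. Fin-index `n - 2`. -/
theorem A_CF_inv_one_norm (n : ℕ) (hn : 5 ≤ n) :
    opNormP n 1 (A_CF n)⁻¹ = ((n : ℝ) ^ 4 - (n : ℝ) ^ 2) / 8 ∧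
    (∀ j : Fin n, ∑ i : Fin n, |(A_CF n)⁻¹ i j| ≤ ((n : ℝ) ^ 4 - (n : ℝ) ^ 2) / 8) ∧
    ∑ i : Fin n, |(A_CF n)⁻¹ i ⟨n - 2, by omega⟩| = ((n : ℝ) ^ 4 - (n : ℝ) ^ 2) / 8 := by
  obtain ⟨m, rfl⟩ : ∃ m, n = m + 5 := ⟨n - 5, by omega⟩
  have hAa : ∀ i k : Fin (m+5), A_CF (m+5) i k = aN (m+5) (i:ℕ) (k:ℕ) := fun i k => rfl
  have hprod : A_CF (m+5) * Bmat (m+5) = 1 := by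
    ext i j
    rw [Matrix.mul_apply, Matrix.one_apply]
    have hterm : ∀ k : Fin (m+5), A_CF (m+5) i k * Bmat (m+5) k j
        = cfac (m+5) (j:ℕ) * (aN (m+5) (i:ℕ) (k:ℕ) * gEnt (k:ℕ) (j:ℕ)) := by
      intro k
      rw [hAa]
      show aN (m+5) (i:ℕ) (k:ℕ) * (cfac (m+5) (j:ℕ) * gEnt (k:ℕ) (j:ℕ)) = _
      ring
    rw [Finset.sum_congr rfl (fun k _ => hterm k), ← Finset.mul_sum,
      Fin.sum_univ_eq_sum_range (fun k => aN (m+5) (i:ℕ) k * gEnt k (j:ℕ)) (m+5),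
      key_sum m (i:ℕ) (j:ℕ) i.isLt j.isLt]
    by_cases hij : i = j
    · rw [if_pos (show (i:ℕ) = (j:ℕ) from congrArg _ hij), if_pos hij]
      unfold cfac
      by_cases h4 : (j:ℕ) = m + 4
      · rw [if_pos h4, if_pos (by omega)]; norm_num
      · rw [if_neg h4, if_neg (by omega)]; norm_num
    · rw [if_neg (fun hc => hij (Fin.ext hc)), if_neg hij]
      ring
  have hinv : (A_CF (m+5))⁻¹ = Bmat (m+5) := Matrix.inv_eq_right_inv hprod
  have hcfac_nonneg : ∀ j : ℕ, 0 ≤ cfac (m+5) j := by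
    intro j; unfold cfac; split_ifs <;> norm_num
  have hBabs : ∀ i j : Fin (m+5), |Bmat (m+5) i j| = cfac (m+5) (j:ℕ) * gEnt (i:ℕ) (j:ℕ) := by
    intro i j
    exact abs_of_nonneg (mul_nonneg (hcfac_nonneg _) (gEnt_nonneg _ _))
  have hC : (((m+5:ℕ) : ℝ) ^ 4 - ((m+5:ℕ) : ℝ) ^ 2) / 8 = (((m:ℝ)+5) ^ 4 - ((m:ℝ)+5) ^ 2) / 8 := by
    push_cast; ring
  have hsumtarget : ∑ i : Fin (m+5), gEnt (i:ℕ) (m+3)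
      = (((m+5:ℕ) : ℝ) ^ 4 - ((m+5:ℕ) : ℝ) ^ 2) / 8 := by
    rw [hC, ← sum_gEnt_col m]
    exact Fin.sum_univ_eq_sum_range (fun i => gEnt i (m+3)) (m+5)
  have hle : ∀ j : Fin (m+5), ∑ i : Fin (m+5), |Bmat (m+5) i j|
      ≤ (((m+5:ℕ) : ℝ) ^ 4 - ((m+5:ℕ) : ℝ) ^ 2) / 8 := by
    intro j
    rw [← hsumtarget]
    refine Finset.sum_le_sum fun i _ => ?_
    rw [hBabs]
    exact bound_pointwise m (i:ℕ) (j:ℕ) i.isLt j.isLt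
  have hj0 : ((⟨m + 5 - 2, by omega⟩ : Fin (m+5)) : ℕ) = m + 3 := rfl
  have heq : ∑ i : Fin (m+5), |Bmat (m+5) i ⟨m + 5 - 2, by omega⟩|
      = (((m+5:ℕ) : ℝ) ^ 4 - ((m+5:ℕ) : ℝ) ^ 2) / 8 := by
    rw [← hsumtarget]
    refine Finset.sum_congr rfl fun i _ => ?_
    rw [hBabs, hj0]
    unfold cfac
    rw [if_neg (by omega), one_mul]
  have hCnn : 0 ≤ (((m+5:ℕ) : ℝ) ^ 4 - ((m+5:ℕ) : ℝ) ^ 2) / 8 := by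
    rw [hC]
    have : (0:ℝ) ≤ (m:ℝ) := Nat.cast_nonneg m
    have h1 : (0:ℝ) ≤ ((m:ℝ)+5)^2 - 1 := by nlinarith
    nlinarith [mul_nonneg (sq_nonneg ((m:ℝ)+5)) h1]
  refine ⟨?_, ?_, ?_⟩
  · rw [hinv]
    exact opNorm_one_eq (m+5) (Bmat (m+5)) _ hCnn hle ⟨m + 5 - 2, by omega⟩ heq
  · intro j; rw [hinv]; exact hle j
  · rw [hinv]; exact heq
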